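/- If a classifier C satisfies log(2/(1+e^{−ε/2}))-rational fairness and ε'-fair treatment (for some finite ε') with respect to a context P, then C satisfies ε-predictive parity with respect to P. -/

import Mathlib

open scoped Classical
open Finset

/-- Multiplicative distance between nonnegative reals, valued in `ℝ≥0∞`. -/
noncomputable def mdist (x y : ℝ) : ENNReal :=
  if x = 0 ∧ y = 0 then 0
  else if 0 < x ∧ 0 < y then ENNReal.ofReal (Real.log (max (x / y) (y / x)))
  else ⊤

/-- Probability of an event `E` under a finitely supported distribution `D`. -/
noncomputable def pr {S : Type} [Fintype S] (D : S → ℝ) (E : S → Prop) : ℝ :=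
  ∑ σ, if E σ then D σ else 0

/-- Conditional probability `Pr[A | B]`, with the convention that it is `0`
when `Pr[B] = 0` (division by zero). -/
noncomputable def cpr {S : Type} [Fintype S] (D : S → ℝ) (A B : S → Prop) : ℝ :=
  pr D (fun σ => A σ ∧ B σ) / pr D B

/-- `D` is a probability mass function. -/
def IsProb {S : Type} [Fintype S] (D : S → ℝ) : Prop :=
  (∀ σ, 0 ≤ D σ) ∧ ∑ σ, D σ = 1

/-- `ε`-fair treatment: conditioned on each class, the classifier's outcome
distribution is `ε`-close (multiplicatively) between any two groups. -/
def FairTreatment {S Ψ G Θ Ω : Type} [Fintype S] (D : S → ℝ) (f : S → Ψ) (g : S → G)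
    (O : S → Θ) (C : Θ → Ω) (ε : ℝ) : Prop :=
  ∀ (X Y : G) (c : Ψ) (o : Ω),
    mdist (cpr D (fun σ => C (O σ) = o) (fun σ => f σ = c ∧ g σ = X))
          (cpr D (fun σ => C (O σ) = o) (fun σ => f σ = c ∧ g σ = Y)) ≤ ENNReal.ofReal ε

/-- `ε`-predictive parity: conditioned on each outcome, the class distribution
is `ε`-close (multiplicatively) between any two groups. -/
def PredParity {S Ψ G Θ Ω : Type} [Fintype S] (D : S → ℝ) (f : S → Ψ) (g : S → G)
    (O : S → Θ) (C : Θ → Ω) (ε : ℝ) : Prop :=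
  ∀ (X Y : G) (o : Ω) (c : Ψ),
    mdist (cpr D (fun σ => f σ = c) (fun σ => C (O σ) = o ∧ g σ = X))
          (cpr D (fun σ => f σ = c) (fun σ => C (O σ) = o ∧ g σ = Y)) ≤ ENNReal.ofReal ε

/-- Expected utility of a mixed action `d` (a distribution over actions),
conditioned on the event `B`. -/
noncomputable def EU {S Ψ A : Type} [Fintype S] [Fintype Ψ] [Fintype A]
    (D : S → ℝ) (f : S → Ψ) (u : Ψ → A → ℝ) (B : S → Prop) (d : A → ℝ) : ℝ :=
  ∑ a, d a * ∑ y, cpr D (fun σ => f σ = y) B * u y a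

/-- `δ`-rational fairness: for every finite action space and `[0,1]`-valued utility,
there is a fair (group-independent, possibly mixed) strategy that is a
`δ`-approximate Nash equilibrium of the induced Bayesian decision game. -/
def RatFair {S Ψ G Θ Ω : Type} [Fintype S] [Fintype Ψ] [Fintype G] [Fintype Ω]
    (D : S → ℝ) (f : S → Ψ) (g : S → G) (O : S → Θ) (C : Θ → Ω) (δ : ℝ) : Prop :=
  ∀ (A : Type) [Fintype A] (u : Ψ → A → ℝ), (∀ y a, 0 ≤ u y a ∧ u y a ≤ 1) →
    ∃ s : G → Ω → A → ℝ,
      (∀ X o, (∀ a, 0 ≤ s X o a) ∧ ∑ a, s X o a = 1) ∧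
      (∀ X Y o, s X o = s Y o) ∧
      (∀ X o, 0 < pr D (fun σ => g σ = X ∧ C (O σ) = o) →
        ∀ d : A → ℝ, (∀ a, 0 ≤ d a) → (∑ a, d a = 1) →
          EU D f u (fun σ => g σ = X ∧ C (O σ) = o) d ≤
            Real.exp δ * EU D f u (fun σ => g σ = X ∧ C (O σ) = o) (s X o))
section Helpers

variable {S : Type} [Fintype S]

lemma pr_congr (D : S → ℝ) {E E' : S → Prop} (h : ∀ σ, E σ ↔ E' σ) :
    pr D E = pr D E' := by
  unfold pr
  exact Finset.sum_congr rfl fun σ _ => by rw [if_congr (h σ) rfl rfl]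

lemma pr_nonneg {D : S → ℝ} (hD : ∀ σ, 0 ≤ D σ) (E : S → Prop) : 0 ≤ pr D E := by
  refine Finset.sum_nonneg fun σ _ => ?_
  split
  · exact hD σ
  · exact le_refl 0

lemma pr_mono {D : S → ℝ} (hD : ∀ σ, 0 ≤ D σ) {E E' : S → Prop}
    (h : ∀ σ, E σ → E' σ) : pr D E ≤ pr D E' := by
  refine Finset.sum_le_sum fun σ _ => ?_
  by_cases hE : E σ
  · simp [hE, h σ hE]
  · simp only [hE, if_false]
    split
    · exact hD σ
    · exact le_refl 0

lemma cpr_congr (D : S → ℝ) {A A' B B' : S → Prop} (hA : ∀ σ, A σ ↔ A' σ)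
    (hB : ∀ σ, B σ ↔ B' σ) : cpr D A B = cpr D A' B' := by
  unfold cpr
  rw [pr_congr D (fun σ => and_congr (hA σ) (hB σ)), pr_congr D hB]

lemma sum_pr_fiber {Ψ : Type} [Fintype Ψ] (D : S → ℝ) (f : S → Ψ) (B : S → Prop) :
    ∑ y : Ψ, pr D (fun σ => f σ = y ∧ B σ) = pr D B := by
  unfold pr
  rw [Finset.sum_comm]
  refine Finset.sum_congr rfl fun σ _ => ?_
  by_cases hB : B σ
  · simp [hB]
  · simp [hB]

lemma sum_cpr_one {Ψ : Type} [Fintype Ψ] (D : S → ℝ) (f : S → Ψ) {B : S → Prop}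
    (hB : pr D B ≠ 0) : ∑ y : Ψ, cpr D (fun σ => f σ = y) B = 1 := by
  unfold cpr
  rw [← Finset.sum_div, sum_pr_fiber, div_self hB]

lemma EU_eval {Ψ : Type} [Fintype Ψ] (D : S → ℝ) (f : S → Ψ)
    (c : Ψ) (θ : ℝ) (B : S → Prop) (hB : (∑ y : Ψ, cpr D (fun σ => f σ = y) B) = 1)
    (d : Bool → ℝ) :
    EU D f (fun y a => if a then (if y = c then 1 else 0) else θ) B d
      = d true * cpr D (fun σ => f σ = c) B + d false * θ := by
  unfold EU
  rw [Fintype.sum_bool]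
  simp only [if_true, if_false, mul_ite, mul_one, mul_zero, Bool.false_eq_true]
  rw [Finset.sum_ite_eq' Finset.univ c (fun y => cpr D (fun σ => f σ = y) B)]
  rw [← Finset.sum_mul, hB]
  simp

end Helpers
section Key

variable {S Ψ G Θ Ω : Type} [Fintype S] [Fintype Ψ] [Fintype G] [Fintype Ω]

/-- Fair treatment with a finite bound transfers positivity of the joint
probability `Pr[f = c ∧ C∘O = o ∧ g = X]` from group `X` to group `Y`. -/
lemma ft_pos (D : S → ℝ) (hD0 : ∀ σ, 0 ≤ D σ) (f : S → Ψ) (g : S → G) (O : S → Θ)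
    (C : Θ → Ω) (ε' : ℝ) (hft : FairTreatment D f g O C ε') (X Y : G) (c : Ψ) (o : Ω)
    (hn : 0 < pr D (fun σ => C (O σ) = o ∧ f σ = c ∧ g σ = X)) :
    0 < pr D (fun σ => C (O σ) = o ∧ f σ = c ∧ g σ = Y) := by
  have hft' := hft X Y c o
  have hDX : 0 < pr D (fun σ => f σ = c ∧ g σ = X) :=
    lt_of_lt_of_le hn (pr_mono hD0 fun σ h => h.2)
  have ha : 0 < cpr D (fun σ => C (O σ) = o) (fun σ => f σ = c ∧ g σ = X) :=
    div_pos hn hDX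
  rw [mdist] at hft'
  rw [if_neg (by rintro ⟨h1, -⟩; exact absurd h1 (ne_of_gt ha))] at hft'
  by_cases hb : 0 < cpr D (fun σ => C (O σ) = o) (fun σ => f σ = c ∧ g σ = Y)
  · -- positivity of the conditional probability forces a positive numerator
    rcases lt_or_eq_of_le (pr_nonneg hD0 (fun σ => C (O σ) = o ∧ f σ = c ∧ g σ = Y))
      with h | h
    · exact h
    · exfalso
      unfold cpr at hb
      rw [← h] at hb
      simp at hb
  · rw [if_neg (by rintro ⟨-, h2⟩; exact hb h2)] at hft'
    exact absurd (top_le_iff.mp hft') ENNReal.ofReal_ne_top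

/-- The key quantitative consequence of rational fairness. -/
lemma rf_key (D : S → ℝ) (hD0 : ∀ σ, 0 ≤ D σ) (f : S → Ψ) (g : S → G) (O : S → Θ)
    (C : Θ → Ω) (ε : ℝ)
    (hrf : RatFair D f g O C (Real.log (2 / (1 + Real.exp (-ε / 2)))))
    (X Y : G) (o : Ω) (c : Ψ)
    (hPX : 0 < pr D (fun σ => g σ = X ∧ C (O σ) = o))
    (hPY : 0 < pr D (fun σ => g σ = Y ∧ C (O σ) = o))
    (hp : 0 < cpr D (fun σ => f σ = c) (fun σ => g σ = X ∧ C (O σ) = o))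
    (hq : 0 < cpr D (fun σ => f σ = c) (fun σ => g σ = Y ∧ C (O σ) = o)) :
    cpr D (fun σ => f σ = c) (fun σ => g σ = X ∧ C (O σ) = o)
      ≤ Real.exp ε * cpr D (fun σ => f σ = c) (fun σ => g σ = Y ∧ C (O σ) = o) := by
  set p := cpr D (fun σ => f σ = c) (fun σ => g σ = X ∧ C (O σ) = o) with hpdef
  set q := cpr D (fun σ => f σ = c) (fun σ => g σ = Y ∧ C (O σ) = o) with hqdef
  have hp1 : p ≤ 1 := by
    rw [hpdef]; unfold cpr
    exact div_le_one_of_le₀ (pr_mono hD0 fun σ h => h.2) (le_of_lt hPX)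
  have hq1 : q ≤ 1 := by
    rw [hqdef]; unfold cpr
    exact div_le_one_of_le₀ (pr_mono hD0 fun σ h => h.2) (le_of_lt hPY)
  set θ := Real.sqrt (p * q) with hθdef
  have hθ : 0 < θ := Real.sqrt_pos.2 (mul_pos hp hq)
  have hθ2 : θ * θ = p * q := Real.mul_self_sqrt (le_of_lt (mul_pos hp hq))
  have hθ1 : θ ≤ 1 := by nlinarith
  obtain ⟨s, hs, hcom, hNE⟩ := hrf Bool
    (fun y a => if a then (if y = c then 1 else 0) else θ)
    (by intro y a
        cases a
        · exact ⟨le_of_lt hθ, hθ1⟩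
        · simp only [if_true]
          split <;> norm_num)
  set x := Real.exp (-ε / 2) with hxdef
  have hx : 0 < x := Real.exp_pos _
  set E := Real.exp (Real.log (2 / (1 + x))) with hEdef
  have hE0 : 0 < E := Real.exp_pos _
  have hEeq : E = 2 / (1 + x) := Real.exp_log (by positivity)
  have hE2 : E * (1 + x) = 2 := by
    rw [hEeq]; field_simp
  set s1 := s X o true with hs1def
  set s0 := s X o false with hs0def
  have hs1n : 0 ≤ s1 := (hs X o).1 true
  have hs0n : 0 ≤ s0 := (hs X o).1 false
  have hssum : s1 + s0 = 1 := by
    have := (hs X o).2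
    rwa [Fintype.sum_bool] at this
  have hsumX := sum_cpr_one D f (ne_of_gt hPX)
  have hsumY := sum_cpr_one D f (ne_of_gt hPY)
  -- equilibrium inequalities
  have h1 : p ≤ E * (s1 * p + s0 * θ) := by
    have := hNE X o hPX (fun a => if a then 1 else 0)
      (by intro a; cases a <;> norm_num) (by rw [Fintype.sum_bool]; norm_num)
    rw [EU_eval D f c θ _ hsumX, EU_eval D f c θ _ hsumX] at this
    simpa using this
  have h2 : θ ≤ E * (s1 * q + s0 * θ) := by
    have := hNE Y o hPY (fun a => if a then 0 else 1)
      (by intro a; cases a <;> norm_num) (by rw [Fintype.sum_bool]; norm_num)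
    rw [EU_eval D f c θ _ hsumY, EU_eval D f c θ _ hsumY, hcom Y X o] at this
    simpa using this
  -- combine: 2 p q ≤ E q (p + θ)
  have key1 : 2 * (p * q) ≤ E * q * (p + θ) := by
    have a1 : q * p ≤ q * (E * (s1 * p + s0 * θ)) :=
      mul_le_mul_of_nonneg_left h1 (le_of_lt hq)
    have a2 : θ * θ ≤ θ * (E * (s1 * q + s0 * θ)) :=
      mul_le_mul_of_nonneg_left h2 (le_of_lt hθ)
    calc 2 * (p * q) = q * p + θ * θ := by rw [hθ2]; ring
      _ ≤ q * (E * (s1 * p + s0 * θ)) + θ * (E * (s1 * q + s0 * θ)) := add_le_add a1 a2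
      _ = E * (s1 * (p * q) + s0 * (q * θ) + s1 * (q * θ) + s0 * (θ * θ)) := by ring
      _ = E * (s1 * (p * q) + s0 * (q * θ) + s1 * (q * θ) + s0 * (p * q)) := by rw [hθ2]
      _ = E * q * (p + θ) * (s1 + s0) := by ring
      _ = E * q * (p + θ) := by rw [hssum]; ring
  have hEx : E * x = 2 - E := by nlinarith [hE2]
  have key2 : x * p ≤ θ := by
    have hEq : 0 < E * q := mul_pos hE0 hq
    rw [← mul_le_mul_iff_of_pos_right hEq]
    calc x * p * (E * q) = (E * x) * (p * q) := by ring
      _ = (2 - E) * (p * q) := by rw [hEx]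
      _ = 2 * (p * q) - E * q * p := by ring
      _ ≤ E * q * (p + θ) - E * q * p := by linarith [key1]
      _ = θ * (E * q) := by ring
  -- square and conclude
  have sq : (x * p) * (x * p) ≤ θ * θ :=
    mul_self_le_mul_self (by positivity) key2
  have hexp1 : Real.exp ε * (x * x) = 1 := by
    rw [hxdef, ← Real.exp_add, ← Real.exp_add,
      show ε + (-ε / 2 + -ε / 2) = 0 from by ring, Real.exp_zero]
  have h5 : p * p ≤ Real.exp ε * (p * q) := by
    calc p * p = Real.exp ε * (x * x) * (p * p) := by rw [hexp1]; ring
      _ = Real.exp ε * ((x * p) * (x * p)) := by ring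
      _ ≤ Real.exp ε * (θ * θ) :=
        mul_le_mul_of_nonneg_left sq (Real.exp_pos ε).le
      _ = Real.exp ε * (p * q) := by rw [hθ2]
  nlinarith [h5, hp]

end Key
theorem predParity_of_ratFair_and_fairTreatment {S Ψ G Θ Ω : Type}
    [Fintype S] [Fintype Ψ] [Fintype G] [Fintype Ω]
    (D : S → ℝ) (hD : IsProb D) (f : S → Ψ) (g : S → G) (O : S → Θ) (C : Θ → Ω)
    (ε ε' : ℝ) (hε : 0 ≤ ε)
    (hft : FairTreatment D f g O C ε')
    (hrf : RatFair D f g O C (Real.log (2 / (1 + Real.exp (-ε / 2))))) :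
    PredParity D f g O C ε := by
  obtain ⟨hD0, -⟩ := hD
  intro X Y o c
  have hnumX : pr D (fun σ => f σ = c ∧ (C (O σ) = o ∧ g σ = X))
      = pr D (fun σ => C (O σ) = o ∧ f σ = c ∧ g σ = X) := pr_congr D (fun σ => by tauto)
  have hnumY : pr D (fun σ => f σ = c ∧ (C (O σ) = o ∧ g σ = Y))
      = pr D (fun σ => C (O σ) = o ∧ f σ = c ∧ g σ = Y) := pr_congr D (fun σ => by tauto)
  by_cases hX : 0 < pr D (fun σ => C (O σ) = o ∧ f σ = c ∧ g σ = X)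
  · -- positive case: fair treatment gives positivity for Y as well
    have hY : 0 < pr D (fun σ => C (O σ) = o ∧ f σ = c ∧ g σ = Y) :=
      ft_pos D hD0 f g O C ε' hft X Y c o hX
    have hPX : 0 < pr D (fun σ => C (O σ) = o ∧ g σ = X) :=
      lt_of_lt_of_le hX (pr_mono hD0 fun σ h => ⟨h.1, h.2.2⟩)
    have hPY : 0 < pr D (fun σ => C (O σ) = o ∧ g σ = Y) :=
      lt_of_lt_of_le hY (pr_mono hD0 fun σ h => ⟨h.1, h.2.2⟩)
    have hp : 0 < cpr D (fun σ => f σ = c) (fun σ => C (O σ) = o ∧ g σ = X) := by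
      unfold cpr
      exact div_pos (hnumX ▸ hX) hPX
    have hq : 0 < cpr D (fun σ => f σ = c) (fun σ => C (O σ) = o ∧ g σ = Y) := by
      unfold cpr
      exact div_pos (hnumY ▸ hY) hPY
    have hcX : cpr D (fun σ => f σ = c) (fun σ => C (O σ) = o ∧ g σ = X)
        = cpr D (fun σ => f σ = c) (fun σ => g σ = X ∧ C (O σ) = o) :=
      cpr_congr D (fun σ => Iff.rfl) (fun σ => and_comm)
    have hcY : cpr D (fun σ => f σ = c) (fun σ => C (O σ) = o ∧ g σ = Y)
        = cpr D (fun σ => f σ = c) (fun σ => g σ = Y ∧ C (O σ) = o) :=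
      cpr_congr D (fun σ => Iff.rfl) (fun σ => and_comm)
    have hPX' : 0 < pr D (fun σ => g σ = X ∧ C (O σ) = o) := by
      rw [pr_congr D (fun σ => (and_comm : (g σ = X ∧ C (O σ) = o) ↔ _))]
      exact hPX
    have hPY' : 0 < pr D (fun σ => g σ = Y ∧ C (O σ) = o) := by
      rw [pr_congr D (fun σ => (and_comm : (g σ = Y ∧ C (O σ) = o) ↔ _))]
      exact hPY
    have hp' : 0 < cpr D (fun σ => f σ = c) (fun σ => g σ = X ∧ C (O σ) = o) := hcX ▸ hp
    have hq' : 0 < cpr D (fun σ => f σ = c) (fun σ => g σ = Y ∧ C (O σ) = o) := hcY ▸ hq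
    have k1 := rf_key D hD0 f g O C ε hrf X Y o c hPX' hPY' hp' hq'
    have k2 := rf_key D hD0 f g O C ε hrf Y X o c hPY' hPX' hq' hp'
    rw [hcX, hcY]
    set p := cpr D (fun σ => f σ = c) (fun σ => g σ = X ∧ C (O σ) = o)
    set q := cpr D (fun σ => f σ = c) (fun σ => g σ = Y ∧ C (O σ) = o)
    rw [mdist, if_neg (fun h => absurd h.1 (ne_of_gt hp')), if_pos ⟨hp', hq'⟩]
    apply ENNReal.ofReal_le_ofReal
    rw [Real.log_le_iff_le_exp (lt_max_of_lt_left (div_pos hp' hq'))]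
    exact max_le ((div_le_iff₀ hq').2 (by linarith)) ((div_le_iff₀ hp').2 (by linarith))
  · by_cases hY : 0 < pr D (fun σ => C (O σ) = o ∧ f σ = c ∧ g σ = Y)
    · exact absurd (ft_pos D hD0 f g O C ε' hft Y X c o hY) hX
    · -- both joint probabilities vanish, so both conditional probabilities are 0
      have hX0 : pr D (fun σ => C (O σ) = o ∧ f σ = c ∧ g σ = X) = 0 :=
        le_antisymm (not_lt.1 hX) (pr_nonneg hD0 _)
      have hY0 : pr D (fun σ => C (O σ) = o ∧ f σ = c ∧ g σ = Y) = 0 :=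
        le_antisymm (not_lt.1 hY) (pr_nonneg hD0 _)
      have e1 : cpr D (fun σ => f σ = c) (fun σ => C (O σ) = o ∧ g σ = X) = 0 := by
        unfold cpr
        rw [hnumX, hX0, zero_div]
      have e2 : cpr D (fun σ => f σ = c) (fun σ => C (O σ) = o ∧ g σ = Y) = 0 := by
        unfold cpr
        rw [hnumY, hY0, zero_div]
      rw [e1, e2]
      simp [mdist]
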